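/- For α ∈ (0,1), the sequence B_N = (1/Γ(2-α))·[1 + Σ_{p=1}^N Γ(p+α-1)/(Γ(α-1) p!)] converges to 0 as N → ∞. -/

import Mathlib

open Real Filter Finset

theorem coeff_B_tendsto_zero (α : ℝ) (hα : α ∈ Set.Ioo (0:ℝ) 1) :
    Filter.Tendsto
      (fun N : ℕ => (1 / Real.Gamma (2 - α)) *
        (1 + ∑ p ∈ Finset.Icc 1 N,
          Real.Gamma ((p : ℝ) + α - 1) / (Real.Gamma (α - 1) * (Nat.factorial p))))
      Filter.atTop (nhds 0) := by
  obtain ⟨h0, h1⟩ := hα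
  have hΓα : 0 < Real.Gamma α := Real.Gamma_pos_of_pos h0
  have hne : α - 1 ≠ 0 := by linarith
  have hΓ1 : Real.Gamma α = (α - 1) * Real.Gamma (α - 1) := by
    have := Real.Gamma_add_one hne
    rw [show α - 1 + 1 = α by ring] at this
    exact this
  set T : ℕ → ℝ := fun N => Real.Gamma (N + α) / (Real.Gamma α * (Nat.factorial N))
  have hT0 : T 0 = 1 := by
    simp only [T, Nat.cast_zero, zero_add, Nat.factorial_zero, Nat.cast_one, mul_one]
    exact div_self hΓα.ne'
  have hTpos : ∀ n : ℕ, 0 < T n := by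
    intro n
    have h1 : (0:ℝ) < (n:ℝ) + α := by positivity
    have h2 : 0 < Real.Gamma ((n:ℝ) + α) := Real.Gamma_pos_of_pos h1
    have h3 : (0:ℝ) < (Nat.factorial n : ℝ) := by exact_mod_cast Nat.factorial_pos n
    exact div_pos h2 (by positivity)
  have hTsucc : ∀ n : ℕ, T (n + 1) = T n * (((n:ℝ) + α) / ((n:ℝ) + 1)) := by
    intro n
    have hΓ : Real.Gamma (((n:ℕ):ℝ) + 1 + α) = ((n:ℝ) + α) * Real.Gamma ((n:ℝ) + α) := by
      rw [show (n:ℝ) + 1 + α = ((n:ℝ) + α) + 1 by ring]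
      exact Real.Gamma_add_one (by positivity)
    have hF : (0:ℝ) < (Nat.factorial n : ℝ) := by exact_mod_cast Nat.factorial_pos n
    simp only [T, Nat.cast_succ, Nat.factorial_succ, Nat.cast_mul, hΓ]
    field_simp
  have key : ∀ N : ℕ, (1 + ∑ p ∈ Finset.Icc 1 N,
      Real.Gamma ((p : ℝ) + α - 1) / (Real.Gamma (α - 1) * (Nat.factorial p))) = T N := by
    intro N
    induction N with
    | zero => simpa using hT0.symm
    | succ n ih =>
      rw [Finset.sum_Icc_succ_top (by norm_num : 1 ≤ n + 1), ← add_assoc, ih, hTsucc n]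
      have hc : ((n:ℝ) + 1 + α - 1) = (n:ℝ) + α := by ring
      push_cast
      rw [hc]
      have hΓ1' : Real.Gamma (α - 1) = Real.Gamma α / (α - 1) := by
        rw [hΓ1]; field_simp
      rw [hΓ1']
      have hF : ((Nat.factorial n : ℝ)) ≠ 0 := by exact_mod_cast (Nat.factorial_pos n).ne'
      have hGn : Real.Gamma ((n:ℝ) + α) ≠ 0 := (Real.Gamma_pos_of_pos (by positivity)).ne'
      simp only [T, Nat.factorial_succ]
      push_cast
      have hn1 : ((n:ℝ) + 1) ≠ 0 := by positivity
      field_simp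
      ring
  -- bound T N ≤ exp ((α-1) * harmonic N)
  set H : ℕ → ℝ := fun N => ∑ i ∈ Finset.range N, (1 / ((i:ℝ) + 1))
  have hbound : ∀ N, T N ≤ Real.exp ((α - 1) * H N) := by
    intro N
    induction N with
    | zero => simp [hT0, H]
    | succ n ih =>
      have hHs : H (n + 1) = H n + 1 / ((n:ℝ) + 1) := by
        simp [H, Finset.sum_range_succ]
      have hfac : ((n:ℝ) + α) / ((n:ℝ) + 1) ≤ Real.exp ((α - 1) * (1 / ((n:ℝ) + 1))) := by
        have hx : (α - 1) * (1 / ((n:ℝ) + 1)) + 1 ≤ Real.exp ((α - 1) * (1 / ((n:ℝ) + 1))) :=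
          Real.add_one_le_exp _
        have heq : ((n:ℝ) + α) / ((n:ℝ) + 1) = (α - 1) * (1 / ((n:ℝ) + 1)) + 1 := by
          field_simp
          ring
        rw [heq]; exact hx
      have hnn : (0:ℝ) ≤ ((n:ℝ) + α) / ((n:ℝ) + 1) := by positivity
      calc T (n + 1) = T n * (((n:ℝ) + α) / ((n:ℝ) + 1)) := hTsucc n
        _ ≤ Real.exp ((α - 1) * H n) * Real.exp ((α - 1) * (1 / ((n:ℝ) + 1))) :=
            mul_le_mul ih hfac hnn (Real.exp_nonneg _)
        _ = Real.exp ((α - 1) * H (n + 1)) := by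
            rw [← Real.exp_add, hHs]; ring_nf
  have hHtop : Tendsto H atTop atTop := Real.tendsto_sum_range_one_div_nat_succ_atTop
  have hbot : Tendsto (fun N => (α - 1) * H N) atTop atBot := by
    have h1α : (0:ℝ) < 1 - α := by linarith
    have h2 := hHtop.const_mul_atTop h1α
    have h3 := tendsto_neg_atTop_atBot.comp h2
    exact h3.congr fun N => by simp [Function.comp]; ring
  have hexp : Tendsto (fun N => Real.exp ((α - 1) * H N)) atTop (nhds 0) :=
    Real.tendsto_exp_atBot.comp hbot
  have hTzero : Tendsto T atTop (nhds 0) :=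
    squeeze_zero (fun n => (hTpos n).le) hbound hexp
  have : Tendsto (fun N : ℕ => (1 / Real.Gamma (2 - α)) * T N) atTop (nhds 0) := by
    simpa using hTzero.const_mul (1 / Real.Gamma (2 - α))
  refine this.congr fun N => ?_
  rw [key N]
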